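/- For every β > 0 and q > 0, the Laplace transform identity ∫₀^∞ e^{−(β+q)τ} 𝔰^β(τ) dτ = 4π / log(1 + q/β) holds, the integral on the left being finite. -/

import Mathlib

open MeasureTheory Set

/-- `𝔰^β(τ) = 4π ∫₀^∞ β^u τ^{u-1} / Γ(u) du`. -/
noncomputable def sBeta (β τ : ℝ) : ℝ :=
  4 * Real.pi * ∫ u in Set.Ioi (0 : ℝ), β ^ u * τ ^ (u - 1) / Real.Gamma u

/-- Laplace transform identity: `∫₀^∞ e^{-(β+q)τ} 𝔰^β(τ) dτ = 4π / log(1 + q/β)`,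
the integral being (absolutely) finite. -/
theorem stmt3 (β q : ℝ) (hβ : 0 < β) (hq : 0 < q) :
    IntegrableOn (fun τ => Real.exp (-(β + q) * τ) * sBeta β τ) (Set.Ioi 0) ∧
    ∫ τ in Set.Ioi (0 : ℝ), Real.exp (-(β + q) * τ) * sBeta β τ
      = 4 * Real.pi / Real.log (1 + q / β) := by
  set a : ℝ := β + q with ha
  have ha0 : 0 < a := by positivity
  have hba : 0 < β / a := by positivity
  have hab1 : 1 < a / β := by rw [lt_div_iff₀ hβ]; simp [ha]; linarith
  set L : ℝ := Real.log (a / β) with hLdef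
  have hL : 0 < L := Real.log_pos hab1
  have hlog_eq : Real.log (1 + q / β) = L := by
    rw [hLdef]; congr 1; field_simp; exact ha.symm
  set μ := volume.restrict (Ioi (0 : ℝ)) with hμ
  set f : ℝ → ℝ → ℝ := fun τ u => Real.exp (-a * τ) * (β ^ u * τ ^ (u - 1) / Real.Gamma u)
    with hfdef
  -- pointwise expression of the integrand
  have hpt : ∀ τ : ℝ, Real.exp (-(β + q) * τ) * sBeta β τ
      = 4 * Real.pi * ∫ u in Ioi (0 : ℝ), f τ u := by
    intro τ
    rw [sBeta, hfdef, MeasureTheory.integral_const_mul (Real.exp (-a * τ))]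
    ring
  -- values of the exponential-power function
  have hexp : ∀ u : ℝ, (β / a) ^ u = Real.exp (-(L * u)) := by
    intro u
    rw [Real.rpow_def_of_pos hba, Real.log_div hβ.ne' ha0.ne']
    rw [hLdef, Real.log_div ha0.ne' hβ.ne']
    ring_nf
  -- integrability and integral of each τ-section
  have hsecInt : ∀ u : ℝ, 0 < u → IntegrableOn (fun τ => f τ u) (Ioi 0) := by
    intro u hu
    have h1 : IntegrableOn (fun τ : ℝ => τ ^ (u - 1) * Real.exp (-a * τ ^ (1 : ℝ)))
        (Ioi 0) := integrableOn_rpow_mul_exp_neg_mul_rpow (by linarith) zero_lt_one ha0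
    have h2 : IntegrableOn (fun τ : ℝ => τ ^ (u - 1) * Real.exp (-a * τ)) (Ioi 0) := by
      apply h1.congr
      filter_upwards with τ
      rw [Real.rpow_one]
    have h3 := h2.const_mul (β ^ u / Real.Gamma u)
    apply h3.congr
    filter_upwards with τ
    rw [hfdef]; ring
  have hsecVal : ∀ u : ℝ, 0 < u →
      ∫ τ in Ioi (0 : ℝ), f τ u = (β / a) ^ u := by
    intro u hu
    have hG : Real.Gamma u ≠ 0 := (Real.Gamma_pos_of_pos hu).ne'
    have : ∫ τ in Ioi (0 : ℝ), f τ u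
        = (β ^ u / Real.Gamma u) * ∫ τ in Ioi (0 : ℝ), τ ^ (u - 1) * Real.exp (-(a * τ)) := by
      rw [← MeasureTheory.integral_const_mul]
      refine setIntegral_congr_fun measurableSet_Ioi (fun τ hτ => ?_)
      rw [hfdef]; ring_nf
    rw [this, Real.integral_rpow_mul_exp_neg_mul_Ioi hu ha0,
      Real.div_rpow hβ.le ha0.le, one_div, Real.inv_rpow ha0.le]
    field_simp
  -- integrability and integral of u ↦ (β/a)^u on Ioi 0
  have hBint : IntegrableOn (fun u : ℝ => (β / a) ^ u) (Ioi 0) := by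
    apply (exp_neg_integrableOn_Ioi 0 hL).congr
    filter_upwards with u
    rw [hexp u]; ring_nf
  have hBval : ∫ u in Ioi (0 : ℝ), (β / a) ^ u = 1 / L := by
    have h0 : ∫ u in Ioi (0 : ℝ), (β / a) ^ u
        = ∫ u in Ioi (0 : ℝ), u ^ ((1 : ℝ) - 1) * Real.exp (-(L * u)) := by
      refine setIntegral_congr_fun measurableSet_Ioi (fun u hu => ?_)
      rw [hexp u]; norm_num
    rw [h0, Real.integral_rpow_mul_exp_neg_mul_Ioi one_pos hL, Real.Gamma_one,
      Real.rpow_one, mul_one]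
  -- measurability of the uncurried function on the product
  have hΓ : ContinuousOn (fun p : ℝ × ℝ => Real.Gamma p.2) (Ioi (0:ℝ) ×ˢ Ioi (0:ℝ)) := by
    intro p hp
    simp only [mem_prod, mem_Ioi] at hp
    have : ∀ m : ℕ, p.2 ≠ -m := by
      intro m h
      have := hp.2
      rw [h] at this
      have : (0:ℝ) ≤ m := Nat.cast_nonneg m
      linarith
    exact ((Real.differentiableAt_Gamma this).continuousAt.comp
      continuousAt_snd).continuousWithinAt
  have hcont : ContinuousOn (Function.uncurry f) (Ioi (0:ℝ) ×ˢ Ioi (0:ℝ)) := by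
    apply ContinuousOn.mul
    · exact (Real.continuous_exp.comp (continuous_const.mul continuous_fst)).continuousOn
    · apply ContinuousOn.div
      · apply ContinuousOn.mul
        · exact continuousOn_const.rpow continuous_snd.continuousOn
            (fun p _ => Or.inl hβ.ne')
        · exact continuous_fst.continuousOn.rpow
            (continuous_snd.continuousOn.sub continuousOn_const)
            (fun p hp => Or.inl (ne_of_gt hp.1))
      · exact hΓ
      · intro p hp
        simp only [mem_prod, mem_Ioi] at hp
        exact (Real.Gamma_pos_of_pos hp.2).ne'
  have hmeas : AEStronglyMeasurable (Function.uncurry f) (μ.prod μ) := by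
    rw [hμ, Measure.prod_restrict]
    exact hcont.aestronglyMeasurable (measurableSet_Ioi.prod measurableSet_Ioi)
  -- nonnegativity
  have hnonneg : ∀ τ u : ℝ, 0 < τ → 0 < u → 0 ≤ f τ u := by
    intro τ u hτ hu
    rw [hfdef]
    have := Real.Gamma_pos_of_pos hu
    have := Real.rpow_pos_of_pos hτ (u - 1)
    have := Real.rpow_pos_of_pos hβ u
    positivity
  -- integrability on the product via Tonelli
  have hInt : Integrable (Function.uncurry f) (μ.prod μ) := by
    rw [MeasureTheory.integrable_prod_iff' hmeas]
    constructor
    · filter_upwards [ae_restrict_mem measurableSet_Ioi] with u hu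
      exact hsecInt u hu
    · apply hBint.congr
      filter_upwards [ae_restrict_mem measurableSet_Ioi] with u hu
      have : ∫ τ, ‖Function.uncurry f (τ, u)‖ ∂μ = ∫ τ in Ioi (0:ℝ), f τ u := by
        rw [hμ]
        refine setIntegral_congr_fun measurableSet_Ioi (fun τ hτ => ?_)
        exact Real.norm_of_nonneg (hnonneg τ u hτ hu)
      rw [this, hsecVal u hu]
  -- conclusion
  have hswap := MeasureTheory.integral_integral_swap hInt
  have hinner : Integrable (fun τ => ∫ u, f τ u ∂μ) μ := hInt.integral_prod_left
  constructor
  · apply (hinner.const_mul (4 * Real.pi)).congr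
      (g := fun τ => Real.exp (-(β + q) * τ) * sBeta β τ)
    filter_upwards with τ
    rw [hpt τ]
  · calc ∫ τ in Ioi (0:ℝ), Real.exp (-(β + q) * τ) * sBeta β τ
        = ∫ τ in Ioi (0:ℝ), 4 * Real.pi * ∫ u in Ioi (0:ℝ), f τ u := by
          exact setIntegral_congr_fun measurableSet_Ioi (fun τ _ => hpt τ)
      _ = 4 * Real.pi * ∫ τ, (∫ u, f τ u ∂μ) ∂μ := by
          rw [← MeasureTheory.integral_const_mul]
      _ = 4 * Real.pi * ∫ u, (∫ τ, f τ u ∂μ) ∂μ := by rw [hswap]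
      _ = 4 * Real.pi * ∫ u in Ioi (0:ℝ), (β / a) ^ u := by
          congr 1
          exact setIntegral_congr_fun measurableSet_Ioi (fun u hu => hsecVal u hu)
      _ = 4 * Real.pi / Real.log (1 + q / β) := by
          rw [hBval, hlog_eq]; ring
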